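/- Let n ≥ 1 and q ≥ 1 be integers, let λ̊_1, …, λ̊_n be real numbers, and let B_1, …, B_q be real symmetric n×n matrices. Then Σ_{α=1}^q (Σ_i λ̊_i (B_α)_{ii})² + Σ_{α=1}^q Σ_{i≠j} (λ̊_i − λ̊_j)² ((B_α)_{ij})² ≤ 2 (Σ_i λ̊_i²) (Σ_{α=1}^q ‖B_α‖²). -/
import Mathlib


open scoped BigOperators
open Matrix

/-- `Σ_α (Σ_i λ̊_i (B_α)_{ii})² + Σ_α Σ_{i≠j} (λ̊_i − λ̊_j)² ((B_α)_{ij})²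
      ≤ 2 (Σ_i λ̊_i²)(Σ_α ‖B_α‖²)`. -/
theorem stmt_2 (n q : ℕ) (hn : 1 ≤ n) (hq : 1 ≤ q)
    (lam : Fin n → ℝ)
    (B : Fin q → Matrix (Fin n) (Fin n) ℝ)
    (hB : ∀ α, (B α)ᵀ = B α) :
    (∑ α, (∑ i, lam i * B α i i) ^ 2)
      + (∑ α, ∑ i, ∑ j, if i ≠ j then (lam i - lam j) ^ 2 * (B α i j) ^ 2 else 0)
    ≤ 2 * (∑ i, (lam i) ^ 2) * (∑ α, ∑ i, ∑ j, (B α i j) ^ 2) := by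
  set S : ℝ := ∑ i, (lam i) ^ 2 with hS
  have hSnn : 0 ≤ S := Finset.sum_nonneg fun i _ => sq_nonneg _
  have hlam : ∀ k : Fin n, (lam k) ^ 2 ≤ S := fun k =>
    Finset.single_le_sum (fun i _ => sq_nonneg (lam i)) (Finset.mem_univ k)
  have key : ∀ α : Fin q,
      (∑ i, lam i * B α i i) ^ 2
        + (∑ i, ∑ j, if i ≠ j then (lam i - lam j) ^ 2 * (B α i j) ^ 2 else 0)
      ≤ 2 * S * (∑ i, ∑ j, (B α i j) ^ 2) := by
    intro α
    have h1 : (∑ i, lam i * B α i i) ^ 2 ≤ S * (∑ i, (B α i i) ^ 2) := by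
      simpa [hS] using
        Finset.sum_mul_sq_le_sq_mul_sq Finset.univ lam (fun i => B α i i)
    have h2 : (∑ i, ∑ j, if i ≠ j then (lam i - lam j) ^ 2 * (B α i j) ^ 2 else 0)
        ≤ 2 * S * (∑ i, ∑ j, if i ≠ j then (B α i j) ^ 2 else 0) := by
      rw [Finset.mul_sum]
      refine Finset.sum_le_sum fun i _ => ?_
      rw [Finset.mul_sum]
      refine Finset.sum_le_sum fun j _ => ?_
      by_cases h : i ≠ j
      · rw [if_pos h, if_pos h]
        have hij : lam i ^ 2 + lam j ^ 2 ≤ S := by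
          have h' := Finset.sum_le_univ_sum_of_nonneg (s := {i, j})
            (f := fun k => lam k ^ 2) (fun k => sq_nonneg _)
          simpa [Finset.sum_pair h] using h'
        have : (lam i - lam j) ^ 2 ≤ 2 * S := by
          nlinarith [sq_nonneg (lam i + lam j)]
        nlinarith [sq_nonneg (B α i j)]
      · simp [h]
    have h3 : (∑ i, (B α i i) ^ 2)
        + (∑ i, ∑ j, if i ≠ j then (B α i j) ^ 2 else 0)
        ≤ ∑ i, ∑ j, (B α i j) ^ 2 := by
      rw [← Finset.sum_add_distrib]
      refine Finset.sum_le_sum fun i _ => ?_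
      have : (B α i i) ^ 2 = ∑ j, if i = j then (B α i j) ^ 2 else 0 := by
        simp
      rw [this, ← Finset.sum_add_distrib]
      refine Finset.sum_le_sum fun j _ => ?_
      by_cases h : i = j <;> simp [h]
    nlinarith [Finset.sum_nonneg (fun i (_ : i ∈ (Finset.univ : Finset (Fin n))) =>
      Finset.sum_nonneg fun j (_ : j ∈ (Finset.univ : Finset (Fin n))) =>
        sq_nonneg (B α i j)), sq_nonneg (∑ i, lam i * B α i i)]
  calc (∑ α, (∑ i, lam i * B α i i) ^ 2)
      + (∑ α, ∑ i, ∑ j, if i ≠ j then (lam i - lam j) ^ 2 * (B α i j) ^ 2 else 0)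
      = ∑ α, ((∑ i, lam i * B α i i) ^ 2
          + (∑ i, ∑ j, if i ≠ j then (lam i - lam j) ^ 2 * (B α i j) ^ 2 else 0)) := by
        rw [Finset.sum_add_distrib]
    _ ≤ ∑ α, 2 * S * (∑ i, ∑ j, (B α i j) ^ 2) := Finset.sum_le_sum fun α _ => key α
    _ = 2 * S * (∑ α, ∑ i, ∑ j, (B α i j) ^ 2) := (Finset.mul_sum _ _ _).symm
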